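/- Let B > 0, let q be a probability density on ℝ supported in [−B,B], and let p_T be a probability density on ℝ with m₁ = ∫_ℝ |x| p_T(x) dx < ∞. Then for every α ∈ (0,1), F(α) = −∫_ℝ p_T(x) log H(α,x) dx is well defined and satisfies |F(α)| ≤ ((1−α)² B² + 2(1−α) B m₁)/(2α²). -/
import Mathlib


open MeasureTheory Real Filter
open scoped ENNReal Topology

/-- The correction factor `H(α,x) = ∫ ν, exp(-(1/(2α²))((1-α)² ν² - 2(1-α) x ν)) q(ν) dν`. -/
noncomputable def Hfun (q : ℝ → ℝ) (α x : ℝ) : ℝ :=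
  ∫ ν : ℝ, Real.exp (-(1 / (2 * α ^ 2)) * ((1 - α) ^ 2 * ν ^ 2 - 2 * (1 - α) * x * ν)) * q ν

/-- If `q` is a probability density supported in `[-B,B]` and `p_T` is a probability density
with finite first absolute moment `m₁`, then for every `α ∈ (0,1)`,
`F(α) = -∫ p_T(x) log H(α,x) dx` is well defined and
`|F(α)| ≤ ((1-α)² B² + 2(1-α) B m₁)/(2α²)`. -/
theorem statement9 (B : ℝ) (hB : 0 < B)
    (q : ℝ → ℝ) (hq_meas : Measurable q) (hq_nonneg : ∀ x, 0 ≤ q x)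
    (hq_one : ∫ x, q x = 1) (hq_supp : Function.support q ⊆ Set.Icc (-B) B)
    (pT : ℝ → ℝ) (hpT_meas : Measurable pT) (hpT_nonneg : ∀ x, 0 ≤ pT x)
    (hpT_one : ∫ x, pT x = 1)
    (hpT_mom : Integrable (fun x => |x| * pT x)) :
    ∀ α ∈ Set.Ioo (0 : ℝ) 1,
      Integrable (fun x => pT x * Real.log (Hfun q α x)) ∧
      |-∫ x : ℝ, pT x * Real.log (Hfun q α x)|
        ≤ ((1 - α) ^ 2 * B ^ 2 + 2 * (1 - α) * B * (∫ x : ℝ, |x| * pT x)) / (2 * α ^ 2) := by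
  rintro α ⟨hα0, hα1⟩
  have h1α : (0:ℝ) ≤ 1 - α := by linarith
  have h2α : (0:ℝ) < 2 * α ^ 2 := by positivity
  have hq_int : Integrable q := by
    by_contra h
    rw [integral_undef h] at hq_one; norm_num at hq_one
  have hpT_int : Integrable pT := by
    by_contra h
    rw [integral_undef h] at hpT_one; norm_num at hpT_one
  set A : ℝ := (1 - α) ^ 2 * B ^ 2 with hA
  set C : ℝ := 2 * (1 - α) * B with hC
  have hA0 : 0 ≤ A := by positivity
  have hC0 : 0 ≤ C := by positivity
  -- pointwise bounds on the exponential integrand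
  have hbound : ∀ x ν : ℝ,
      Real.exp (-((A + C * |x|) / (2 * α ^ 2))) * q ν
        ≤ Real.exp (-(1 / (2 * α ^ 2)) * ((1 - α) ^ 2 * ν ^ 2 - 2 * (1 - α) * x * ν)) * q ν ∧
      Real.exp (-(1 / (2 * α ^ 2)) * ((1 - α) ^ 2 * ν ^ 2 - 2 * (1 - α) * x * ν)) * q ν
        ≤ Real.exp ((A + C * |x|) / (2 * α ^ 2)) * q ν := by
    intro x ν
    by_cases hν : q ν = 0
    · simp [hν]
    · have hmem := hq_supp (Function.mem_support.mpr hν)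
      have hνB : |ν| ≤ B := abs_le.mpr ⟨hmem.1, hmem.2⟩
      have hν2 : ν ^ 2 ≤ B ^ 2 := by nlinarith [sq_abs ν, abs_nonneg ν]
      have hxu : x * ν ≤ |x| * B :=
        le_trans (le_abs_self _)
          (by rw [abs_mul]; exact mul_le_mul_of_nonneg_left hνB (abs_nonneg x))
      have hxl : -(|x| * B) ≤ x * ν := by
        have h1 : -|x * ν| ≤ x * ν := neg_abs_le _
        have h2 : |x * ν| ≤ |x| * B := by
          rw [abs_mul]; exact mul_le_mul_of_nonneg_left hνB (abs_nonneg x)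
        linarith
      have hDle : (1 - α) ^ 2 * ν ^ 2 - 2 * (1 - α) * x * ν ≤ A + C * |x| := by
        rw [hA, hC]
        nlinarith [mul_nonneg (sq_nonneg (1 - α)) (show (0:ℝ) ≤ B ^ 2 - ν ^ 2 by linarith),
          mul_nonneg h1α (show (0:ℝ) ≤ x * ν + |x| * B by linarith)]
      have hDge : -(A + C * |x|) ≤ (1 - α) ^ 2 * ν ^ 2 - 2 * (1 - α) * x * ν := by
        rw [hA, hC]
        nlinarith [mul_nonneg (sq_nonneg (1 - α)) (show (0:ℝ) ≤ B ^ 2 - ν ^ 2 by linarith),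
          mul_nonneg h1α (show (0:ℝ) ≤ |x| * B - x * ν by linarith)]
      set D : ℝ := (1 - α) ^ 2 * ν ^ 2 - 2 * (1 - α) * x * ν with hD
      have hel : -((A + C * |x|) / (2 * α ^ 2)) ≤ -(1 / (2 * α ^ 2)) * D := by
        have heq : -(1 / (2 * α ^ 2)) * D + (A + C * |x|) / (2 * α ^ 2)
            = ((A + C * |x|) - D) / (2 * α ^ 2) := by ring
        have hnn := div_nonneg (show (0:ℝ) ≤ (A + C * |x|) - D by linarith) h2α.le
        linarith
      have heu : -(1 / (2 * α ^ 2)) * D ≤ (A + C * |x|) / (2 * α ^ 2) := by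
        have heq : (A + C * |x|) / (2 * α ^ 2) - (-(1 / (2 * α ^ 2)) * D)
            = ((A + C * |x|) + D) / (2 * α ^ 2) := by ring
        have hnn := div_nonneg (show (0:ℝ) ≤ (A + C * |x|) + D by linarith) h2α.le
        linarith
      exact ⟨mul_le_mul_of_nonneg_right (Real.exp_le_exp.mpr hel) (hq_nonneg ν),
        mul_le_mul_of_nonneg_right (Real.exp_le_exp.mpr heu) (hq_nonneg ν)⟩
  -- integrability of the inner integrand, and bounds on H
  have hg_meas : ∀ x : ℝ, Measurable (fun ν : ℝ =>
      Real.exp (-(1 / (2 * α ^ 2)) * ((1 - α) ^ 2 * ν ^ 2 - 2 * (1 - α) * x * ν)) * q ν) := by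
    intro x
    exact (((measurable_const.mul ((measurable_const.mul (measurable_id.pow_const 2)).sub
      (measurable_const.mul measurable_id))).exp).mul hq_meas)
  have hg_int : ∀ x : ℝ, Integrable (fun ν : ℝ =>
      Real.exp (-(1 / (2 * α ^ 2)) * ((1 - α) ^ 2 * ν ^ 2 - 2 * (1 - α) * x * ν)) * q ν) := by
    intro x
    refine Integrable.mono (hq_int.const_mul (Real.exp ((A + C * |x|) / (2 * α ^ 2))))
      (hg_meas x).aestronglyMeasurable ?_
    filter_upwards with ν
    rw [Real.norm_eq_abs, Real.norm_eq_abs,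
      abs_of_nonneg (mul_nonneg (Real.exp_pos _).le (hq_nonneg ν)),
      abs_of_nonneg (mul_nonneg (Real.exp_pos _).le (hq_nonneg ν))]
    exact (hbound x ν).2
  have hHlow : ∀ x : ℝ, Real.exp (-((A + C * |x|) / (2 * α ^ 2))) ≤ Hfun q α x := by
    intro x
    calc Real.exp (-((A + C * |x|) / (2 * α ^ 2)))
        = ∫ ν : ℝ, Real.exp (-((A + C * |x|) / (2 * α ^ 2))) * q ν := by
          rw [integral_const_mul, hq_one, mul_one]
      _ ≤ Hfun q α x :=
          integral_mono (hq_int.const_mul _) (hg_int x) (fun ν => (hbound x ν).1)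
  have hHhigh : ∀ x : ℝ, Hfun q α x ≤ Real.exp ((A + C * |x|) / (2 * α ^ 2)) := by
    intro x
    calc Hfun q α x
        ≤ ∫ ν : ℝ, Real.exp ((A + C * |x|) / (2 * α ^ 2)) * q ν :=
          integral_mono (hg_int x) (hq_int.const_mul _) (fun ν => (hbound x ν).2)
      _ = Real.exp ((A + C * |x|) / (2 * α ^ 2)) := by
          rw [integral_const_mul, hq_one, mul_one]
  have hHpos : ∀ x : ℝ, 0 < Hfun q α x := fun x => lt_of_lt_of_le (Real.exp_pos _) (hHlow x)
  have key : ∀ x : ℝ, |Real.log (Hfun q α x)| ≤ (A + C * |x|) / (2 * α ^ 2) := by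
    intro x
    rw [abs_le]
    constructor
    · calc -((A + C * |x|) / (2 * α ^ 2))
          = Real.log (Real.exp (-((A + C * |x|) / (2 * α ^ 2)))) := (Real.log_exp _).symm
        _ ≤ Real.log (Hfun q α x) := Real.log_le_log (Real.exp_pos _) (hHlow x)
    · calc Real.log (Hfun q α x)
          ≤ Real.log (Real.exp ((A + C * |x|) / (2 * α ^ 2))) :=
            Real.log_le_log (hHpos x) (hHhigh x)
        _ = (A + C * |x|) / (2 * α ^ 2) := Real.log_exp _
  -- measurability of x ↦ H(α,x)
  have hH_meas : StronglyMeasurable (fun x : ℝ => Hfun q α x) := by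
    have hF : Measurable (fun p : ℝ × ℝ =>
        Real.exp (-(1 / (2 * α ^ 2)) * ((1 - α) ^ 2 * p.2 ^ 2 - 2 * (1 - α) * p.1 * p.2)) * q p.2) := by
      apply Measurable.mul
      · apply Real.measurable_exp.comp
        apply Measurable.mul measurable_const
        exact ((measurable_const.mul (measurable_snd.pow_const 2)).sub
          ((measurable_const.mul measurable_fst).mul measurable_snd))
      · exact hq_meas.comp measurable_snd
    exact hF.stronglyMeasurable.integral_prod_right'
  have hint_meas : AEStronglyMeasurable (fun x => pT x * Real.log (Hfun q α x)) volume :=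
    (hpT_meas.aestronglyMeasurable.mul
      ((Real.measurable_log.comp hH_meas.measurable).aestronglyMeasurable))
  -- the dominating function
  have hdom : Integrable (fun x => pT x * ((A + C * |x|) / (2 * α ^ 2))) := by
    have heq : (fun x => pT x * ((A + C * |x|) / (2 * α ^ 2)))
        = fun x => (A / (2 * α ^ 2)) * pT x + (C / (2 * α ^ 2)) * (|x| * pT x) := by
      funext x; ring
    rw [heq]
    exact (hpT_int.const_mul _).add (hpT_mom.const_mul _)
  have hint : Integrable (fun x => pT x * Real.log (Hfun q α x)) := by
    refine hdom.mono hint_meas ?_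
    filter_upwards with x
    rw [Real.norm_eq_abs, Real.norm_eq_abs, abs_mul, abs_of_nonneg (hpT_nonneg x),
      abs_of_nonneg (mul_nonneg (hpT_nonneg x)
        (div_nonneg (by positivity) h2α.le))]
    exact mul_le_mul_of_nonneg_left (key x) (hpT_nonneg x)
  refine ⟨hint, ?_⟩
  rw [abs_neg]
  calc |∫ x : ℝ, pT x * Real.log (Hfun q α x)|
      ≤ ∫ x : ℝ, |pT x * Real.log (Hfun q α x)| := by
        simpa [Real.norm_eq_abs, abs_mul] using
          norm_integral_le_integral_norm (fun x => pT x * Real.log (Hfun q α x))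
    _ ≤ ∫ x : ℝ, pT x * ((A + C * |x|) / (2 * α ^ 2)) := by
        refine integral_mono hint.abs hdom (fun x => ?_)
        rw [abs_mul, abs_of_nonneg (hpT_nonneg x)]
        exact mul_le_mul_of_nonneg_left (key x) (hpT_nonneg x)
    _ = (A + C * (∫ x : ℝ, |x| * pT x)) / (2 * α ^ 2) := by
        have heq : (fun x => pT x * ((A + C * |x|) / (2 * α ^ 2)))
            = fun x => (A / (2 * α ^ 2)) * pT x + (C / (2 * α ^ 2)) * (|x| * pT x) := by
          funext x; ring
        rw [heq, integral_add (hpT_int.const_mul _) (hpT_mom.const_mul _),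
          integral_const_mul, integral_const_mul, hpT_one]
        ring
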